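/- Let n ≥ 3, V = ℂⁿ ⊗ ℂⁿ, and 𝔤 = {A ⊗ id + id ⊗ B + λ·id_V : A, B ∈ End(ℂⁿ) with tr A = tr B = 0, λ ∈ ℂ} ⊆ End(V) (the image of sl(n,ℂ) ⊕ sl(n,ℂ) ⊕ ℂ acting on ℂⁿ ⊗ ℂⁿ). Then every skew-curvature tensor of type 𝔤 takes values in the subalgebra {A ⊗ id + id ⊗ B : tr A = tr B = 0}; equivalently, tr(R(x,y)) = 0 for every R ∈ 𝓡̄(𝔤) and all x, y ∈ V. In particular, 𝓡̄(sl(n,ℂ) ⊕ sl(n,ℂ) ⊕ ℂ) = 𝓡̄(sl(n,ℂ) ⊕ sl(n,ℂ)) and sl(n,ℂ) ⊕ sl(n,ℂ) ⊕ ℂ acting on ℂⁿ ⊗ ℂⁿ is not a skew-Berger algebra. -/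

import Mathlib

open TensorProduct

/-- A skew-curvature tensor of type `h`. -/
def IsSkewCurv {V : Type*} [AddCommGroup V] [Module ℂ V]
    (h : Submodule ℂ (Module.End ℂ V)) (R : V →ₗ[ℂ] V →ₗ[ℂ] Module.End ℂ V) : Prop :=
  (∀ x y, R x y = R y x) ∧ (∀ x y, R x y ∈ h) ∧
  (∀ x y z, R x y z + R y z x + R z x y = 0)

/-- `h` is a skew-Berger algebra. -/
def IsSkewBerger {V : Type*} [AddCommGroup V] [Module ℂ V]
    (h : Submodule ℂ (Module.End ℂ V)) : Prop :=
  h = Submodule.span ℂ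
    {T | ∃ R : V →ₗ[ℂ] V →ₗ[ℂ] Module.End ℂ V,
      IsSkewCurv h R ∧ ∃ x y : V, T = R x y}

namespace Stmt9Aux

noncomputable section

variable (n : ℕ)

abbrev Vn := (Fin n → ℂ) ⊗[ℂ] (Fin n → ℂ)

def bV : Module.Basis (Fin n × Fin n) ℂ (Vn n) :=
  (Pi.basisFun ℂ (Fin n)).tensorProduct (Pi.basisFun ℂ (Fin n))

def E (i j : Fin n) : Vn n := (Pi.basisFun ℂ (Fin n)) i ⊗ₜ (Pi.basisFun ℂ (Fin n)) j

variable {n}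

def ent (T : Module.End ℂ (Vn n)) (a b c d : Fin n) : ℂ :=
  (bV n).repr (T (E n c d)) (a, b)

def hset (n : ℕ) : Submodule ℂ (Module.End ℂ (Vn n)) :=
  Submodule.span ℂ
      {T : Module.End ℂ ((Fin n → ℂ) ⊗[ℂ] (Fin n → ℂ)) |
        ∃ A B : Module.End ℂ (Fin n → ℂ), ∃ c : ℂ,
          LinearMap.trace ℂ (Fin n → ℂ) A = 0 ∧ LinearMap.trace ℂ (Fin n → ℂ) B = 0 ∧
          T = TensorProduct.map A LinearMap.id + TensorProduct.map LinearMap.id B + c • 1}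

lemma map_zero_left' : TensorProduct.map (0 : Module.End ℂ (Fin n → ℂ))
    (LinearMap.id : Module.End ℂ (Fin n → ℂ)) = (0 : Module.End ℂ (Vn n)) := by
  apply TensorProduct.ext'
  intro x y
  simp

lemma map_zero_right' : TensorProduct.map (LinearMap.id : Module.End ℂ (Fin n → ℂ))
    (0 : Module.End ℂ (Fin n → ℂ)) = (0 : Module.End ℂ (Vn n)) := by
  apply TensorProduct.ext'
  intro x y
  simp

lemma mem_decomp {T : Module.End ℂ (Vn n)} (hT : T ∈ hset n) :
    ∃ A B : Module.End ℂ (Fin n → ℂ), ∃ c : ℂ,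
      LinearMap.trace ℂ (Fin n → ℂ) A = 0 ∧ LinearMap.trace ℂ (Fin n → ℂ) B = 0 ∧
      T = TensorProduct.map A LinearMap.id + TensorProduct.map LinearMap.id B + c • 1 := by
  induction hT using Submodule.span_induction with
  | mem x hx => exact hx
  | zero =>
      exact ⟨0, 0, 0, by simp, by simp, by
        rw [map_zero_left', map_zero_right']; simp⟩
  | add x y hx hy ihx ihy =>
      obtain ⟨A, B, c, hA, hB, rfl⟩ := ihx
      obtain ⟨A', B', c', hA', hB', rfl⟩ := ihy
      refine ⟨A + A', B + B', c + c', by simp [hA, hA'], by simp [hB, hB'], ?_⟩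
      rw [TensorProduct.map_add_left, TensorProduct.map_add_right, add_smul]
      abel
  | smul r x hx ihx =>
      obtain ⟨A, B, c, hA, hB, rfl⟩ := ihx
      refine ⟨r • A, r • B, r • c, by simp [hA], by simp [hB], ?_⟩
      rw [TensorProduct.map_smul_left, TensorProduct.map_smul_right, smul_assoc]
      simp [smul_add]


def eb : Fin n → (Fin n → ℂ) := Pi.basisFun ℂ (Fin n)

lemma trace_eq_sum (A : Module.End ℂ (Fin n → ℂ)) :
    LinearMap.trace ℂ (Fin n → ℂ) A = ∑ a, A (eb a) a := by
  rw [LinearMap.trace_eq_matrix_trace ℂ (Pi.basisFun ℂ (Fin n))]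
  simp [Matrix.trace, Matrix.diag, LinearMap.toMatrix_apply, Pi.basisFun_repr, eb]

lemma ent_formula (A B : Module.End ℂ (Fin n → ℂ)) (c : ℂ) (a b c' d : Fin n) :
    ent (TensorProduct.map A LinearMap.id + TensorProduct.map LinearMap.id B + c • 1 :
      Module.End ℂ (Vn n)) a b c' d
    = (if b = d then A (eb c') a else 0) + (if a = c' then B (eb d) b else 0)
      + (if a = c' ∧ b = d then c else 0) := by
  simp only [ent, E, LinearMap.add_apply, LinearMap.smul_apply, Module.End.one_apply,
    TensorProduct.map_tmul, LinearMap.id_coe, id_eq, map_add, Finsupp.add_apply,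
    TensorProduct.smul_tmul', map_smul, Finsupp.smul_apply, bV,
    Module.Basis.tensorProduct_repr_tmul_apply, Pi.basisFun_repr, Pi.basisFun_apply, eb,
    Pi.single_apply, smul_eq_mul]
  split_ifs with h1 h2 h3 h4 h5 h6 h7 <;> simp_all <;> ring

variable {T : Module.End ℂ (Vn n)}

lemma M2 (hT : T ∈ hset n) {a b c d : Fin n} (hac : a ≠ c) (hbd : b ≠ d) :
    ent T a b c d = 0 := by
  obtain ⟨A, B, c', hA, hB, rfl⟩ := mem_decomp hT
  rw [ent_formula]
  simp [hac, hbd]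

lemma M3 (hT : T ∈ hset n) {a c : Fin n} (hac : a ≠ c) (b b' : Fin n) :
    ent T a b c b = ent T a b' c b' := by
  obtain ⟨A, B, c', hA, hB, rfl⟩ := mem_decomp hT
  rw [ent_formula, ent_formula]
  simp [hac]

lemma M4 (hT : T ∈ hset n) {b d : Fin n} (hbd : b ≠ d) (a a' : Fin n) :
    ent T a b a d = ent T a' b a' d := by
  obtain ⟨A, B, c', hA, hB, rfl⟩ := mem_decomp hT
  rw [ent_formula, ent_formula]
  simp [hbd]

lemma ent_diag (A B : Module.End ℂ (Fin n → ℂ)) (c : ℂ) (a b : Fin n) :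
    ent (TensorProduct.map A LinearMap.id + TensorProduct.map LinearMap.id B + c • 1 :
      Module.End ℂ (Vn n)) a b a b = A (eb a) a + B (eb b) b + c := by
  rw [ent_formula]; simp

variable {R : Vn n →ₗ[ℂ] Vn n →ₗ[ℂ] Module.End ℂ (Vn n)}

lemma Bent (hb : ∀ x y z, R x y z + R y z x + R z x y = 0) (p q r s t u a b : Fin n) :
    ent (R (E n p q) (E n r s)) a b t u + ent (R (E n r s) (E n t u)) a b p q
      + ent (R (E n t u) (E n p q)) a b r s = 0 := by
  have h := hb (E n p q) (E n r s) (E n t u)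
  simp only [ent, ← Finsupp.add_apply, ← map_add, h, map_zero, Finsupp.zero_apply]


section RR

variable (hsym : ∀ x y, R x y = R y x) (hmem : ∀ x y, R x y ∈ hset n)
  (hb : ∀ x y z, R x y z + R y z x + R z x y = 0)

include hmem hb

lemma F1 {p q r s l m : Fin n} (hlp : l ≠ p) (hlr : l ≠ r) (hmq : m ≠ q) (hms : m ≠ s) :
    ent (R (E n p q) (E n r s)) l m l m = 0 := by
  have h := Bent hb p q r s l m l m
  rw [M2 (hmem _ _) hlp hmq, M2 (hmem _ _) hlr hms] at h
  simpa using h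

include hsym

lemma K1 {p q r s l m : Fin n} (hpr : p ≠ r) (hqs : q ≠ s) (hlp : l ≠ p) (hlr : l ≠ r)
    (hmq : m ≠ q) (hms : m ≠ s) :
    ent (R (E n p q) (E n r s)) p m p m + ent (R (E n p q) (E n r s)) l q l q = 0 := by
  have h1 := Bent hb p q r s p m p m
  rw [M2 (hmem _ _) hpr hms] at h1
  have h2 := Bent hb p q r s l q l q
  rw [M2 (hmem _ _) hlr hqs] at h2
  have h3 := Bent hb l q r s p m l m
  rw [M2 (hmem _ _) hlr hms] at h3
  rw [M3 (hmem (E n l q) (E n r s)) hlp m q] at h3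
  rw [M4 (hmem (E n r s) (E n p m)) hmq l p] at h3
  rw [hsym (E n l q) (E n r s)] at h3
  linear_combination h1 + h2 - h3

lemma K2 {p q s l m : Fin n} (hqs : q ≠ s) (hlp : l ≠ p) (hmq : m ≠ q) (hms : m ≠ s) :
    ent (R (E n p q) (E n p s)) p m p m + ent (R (E n p q) (E n p s)) l q l q
      + ent (R (E n p q) (E n p s)) l s l s = 0 := by
  have h1 := Bent hb p q p s p m p m
  have h2 := Bent hb p q p s l q l q
  rw [M2 (hmem _ _) hlp hqs] at h2
  have h3 := Bent hb p q p s l s l s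
  rw [M2 (hmem _ _) hlp (by simpa [eq_comm] using hqs.symm : s ≠ q)] at h3
  have h4 := Bent hb l q p s p m l m
  rw [M2 (hmem _ _) hlp hms] at h4
  rw [M3 (hmem (E n l q) (E n p s)) hlp m q] at h4
  rw [M4 (hmem (E n p s) (E n p m)) hmq l p] at h4
  rw [hsym (E n l q) (E n p s)] at h4
  have h5 := Bent hb l s p q p m l m
  rw [M2 (hmem _ _) hlp hmq] at h5
  rw [M3 (hmem (E n l s) (E n p q)) hlp m s] at h5
  rw [M4 (hmem (E n p q) (E n p m)) hms l p] at h5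
  rw [hsym (E n p m) (E n p q)] at h1
  linear_combination h1 + h2 + h3 - h4 - h5

lemma K3 {p q r l m : Fin n} (hpr : p ≠ r) (hlp : l ≠ p) (hlr : l ≠ r) (hmq : m ≠ q) :
    ent (R (E n p q) (E n r q)) p m p m + ent (R (E n p q) (E n r q)) r m r m
      + ent (R (E n p q) (E n r q)) l q l q = 0 := by
  have h1 := Bent hb p q r q p m p m
  rw [M2 (hmem _ _) hpr hmq] at h1
  have h2 := Bent hb p q r q r m r m
  rw [M2 (hmem _ _) (Ne.symm hpr) hmq] at h2
  have h3 := Bent hb p q r q l q l q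
  have h4 := Bent hb l q r q p m l m
  rw [M2 (hmem _ _) hlr hmq] at h4
  rw [M3 (hmem (E n l q) (E n r q)) hlp m q] at h4
  rw [M4 (hmem (E n r q) (E n p m)) hmq l p] at h4
  rw [hsym (E n l q) (E n r q)] at h4
  have h5 := Bent hb l q p q r m l m
  rw [M2 (hmem _ _) hlp hmq] at h5
  rw [M3 (hmem (E n l q) (E n p q)) hlr m q] at h5
  rw [M4 (hmem (E n p q) (E n r m)) hmq l r] at h5
  rw [hsym (E n r m) (E n p q)] at h2
  linear_combination h1 + h2 + h3 - h4 - h5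

lemma K4 {p q l m : Fin n} (hlp : l ≠ p) (hmq : m ≠ q) :
    ent (R (E n p q) (E n p q)) p m p m + ent (R (E n p q) (E n p q)) l q l q = 0 := by
  have h1 := Bent hb p q p q p m p m
  rw [hsym (E n p m) (E n p q)] at h1
  have h2 := Bent hb p q p q l q l q
  rw [hsym (E n l q) (E n p q)] at h2
  have h3 := Bent hb l q p q p m l m
  rw [M2 (hmem _ _) hlp hmq] at h3
  rw [M3 (hmem (E n l q) (E n p q)) hlp m q] at h3
  rw [M4 (hmem (E n p q) (E n p m)) hmq l p] at h3
  rw [hsym (E n l q) (E n p q)] at h3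
  linear_combination h1 + h2 - 2 * h3

end RR

lemma exists_ne2 (hn : 3 ≤ n) (p r : Fin n) : ∃ l : Fin n, l ≠ p ∧ l ≠ r := by
  by_contra hcon
  push_neg at hcon
  have hsub : (Finset.univ : Finset (Fin n)) ⊆ {p, r} := by
    intro l _
    by_cases h : l = p
    · simp [h]
    · simp [hcon l h]
  have h1 : (Finset.univ : Finset (Fin n)).card ≤ ({p, r} : Finset (Fin n)).card :=
    Finset.card_le_card hsub
  have h2 : ({p, r} : Finset (Fin n)).card ≤ 2 :=
    (Finset.card_insert_le _ _).trans (by simp)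
  simp only [Finset.card_univ, Fintype.card_fin] at h1
  omega

lemma sum_split2 (hn : 3 ≤ n) {f : Fin n → ℂ} {p r : Fin n} (hpr : p ≠ r) {α : ℂ}
    (hc : ∀ l, l ≠ p → l ≠ r → f l = α) :
    ∑ i, f i = f p + f r + ((n : ℂ) - 2) * α := by
  classical
  have hr : r ∈ Finset.univ.erase p := Finset.mem_erase.2 ⟨Ne.symm hpr, Finset.mem_univ r⟩
  have h1 : ∑ i, f i = f p + ∑ i ∈ Finset.univ.erase p, f i :=
    (Finset.add_sum_erase _ f (Finset.mem_univ p)).symm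
  have h2 : ∑ i ∈ Finset.univ.erase p, f i
      = f r + ∑ i ∈ (Finset.univ.erase p).erase r, f i :=
    (Finset.add_sum_erase _ f hr).symm
  have h3 : ∑ i ∈ (Finset.univ.erase p).erase r, f i
      = ∑ _i ∈ (Finset.univ.erase p).erase r, α := by
    refine Finset.sum_congr rfl fun x hx => ?_
    rw [Finset.mem_erase, Finset.mem_erase] at hx
    exact hc x hx.2.1 hx.1
  have hcard : ((Finset.univ.erase p).erase r).card = n - 2 := by
    rw [Finset.card_erase_of_mem hr, Finset.card_erase_of_mem (Finset.mem_univ p)]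
    simp only [Finset.card_univ, Fintype.card_fin]
    omega
  rw [h1, h2, h3, Finset.sum_const, hcard, nsmul_eq_mul]
  have : ((n - 2 : ℕ) : ℂ) = (n : ℂ) - 2 := by
    have : (2 : ℕ) ≤ n := by omega
    push_cast [Nat.cast_sub this]
    ring
  rw [this]
  ring

lemma sum_split1 (hn : 3 ≤ n) {f : Fin n → ℂ} {p : Fin n} {α : ℂ}
    (hc : ∀ l, l ≠ p → f l = α) :
    ∑ i, f i = f p + ((n : ℂ) - 1) * α := by
  classical
  have h1 : ∑ i, f i = f p + ∑ i ∈ Finset.univ.erase p, f i :=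
    (Finset.add_sum_erase _ f (Finset.mem_univ p)).symm
  have h3 : ∑ i ∈ Finset.univ.erase p, f i = ∑ _i ∈ Finset.univ.erase p, α := by
    refine Finset.sum_congr rfl fun x hx => ?_
    exact hc x (Finset.mem_erase.1 hx).1
  have hcard : (Finset.univ.erase p).card = n - 1 := by
    rw [Finset.card_erase_of_mem (Finset.mem_univ p)]
    simp [Finset.card_univ]
  rw [h1, h3, Finset.sum_const, hcard, nsmul_eq_mul]
  have : ((n - 1 : ℕ) : ℂ) = (n : ℂ) - 1 := by
    have : (1 : ℕ) ≤ n := by omega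
    push_cast [Nat.cast_sub this]
    ring
  rw [this]

lemma trace_of_czero {A B : Module.End ℂ (Fin n → ℂ)} {c : ℂ} {T : Module.End ℂ (Vn n)}
    (hA : LinearMap.trace ℂ (Fin n → ℂ) A = 0) (hB : LinearMap.trace ℂ (Fin n → ℂ) B = 0)
    (hc : c = 0)
    (hT : T = TensorProduct.map A LinearMap.id + TensorProduct.map LinearMap.id B + c • 1) :
    LinearMap.trace ℂ (Vn n) T = 0 := by
  rw [hT, hc]
  simp [LinearMap.trace_tensorProduct', hA, hB]


lemma bV_apply' (i : Fin n × Fin n) : bV n i = E n i.1 i.2 := by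
  rw [bV, Module.Basis.tensorProduct_apply']; rfl

section Cases

variable {R : Vn n →ₗ[ℂ] Vn n →ₗ[ℂ] Module.End ℂ (Vn n)}
variable (hsym : ∀ x y, R x y = R y x) (hmem : ∀ x y, R x y ∈ hset n)
  (hb : ∀ x y z, R x y z + R y z x + R z x y = 0) (hn : 3 ≤ n)

include hsym hmem hb hn

lemma caseA {p q r s : Fin n} (hpr : p ≠ r) (hqs : q ≠ s) :
    LinearMap.trace ℂ (Vn n) (R (E n p q) (E n r s)) = 0 := by
  obtain ⟨A, B, c, hA, hB, hT⟩ := mem_decomp (hmem (E n p q) (E n r s))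
  obtain ⟨l₀, hl₀p, hl₀r⟩ := exists_ne2 hn p r
  obtain ⟨m₀, hm₀q, hm₀s⟩ := exists_ne2 hn q s
  have hdiag : ∀ i j : Fin n, ent (R (E n p q) (E n r s)) i j i j
      = A (eb i) i + B (eb j) j + c := by
    intro i j; rw [hT]; exact ent_diag A B c i j
  have hfree : ∀ l m : Fin n, l ≠ p → l ≠ r → m ≠ q → m ≠ s →
      A (eb l) l + B (eb m) m + c = 0 := by
    intro l m h1 h2 h3 h4
    have h := F1 hmem hb h1 h2 h3 h4
    rw [hdiag] at h; exact h
  set α := A (eb l₀) l₀ with hα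
  set β := B (eb m₀) m₀ with hβ
  have e5 : α + β + c = 0 := hfree l₀ m₀ hl₀p hl₀r hm₀q hm₀s
  have hsumA : ∑ i, A (eb i) i = 0 := by rw [← trace_eq_sum]; exact hA
  have hsumB : ∑ i, B (eb i) i = 0 := by rw [← trace_eq_sum]; exact hB
  have e1 : A (eb p) p + A (eb r) r + ((n : ℂ) - 2) * α = 0 := by
    have hs := sum_split2 hn (f := fun i => A (eb i) i) hpr (α := α)
      (fun l h1 h2 => by have h := hfree l m₀ h1 h2 hm₀q hm₀s; linear_combination h - e5)
    linear_combination hsumA - hs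
  have e2 : B (eb q) q + B (eb s) s + ((n : ℂ) - 2) * β = 0 := by
    have hs := sum_split2 hn (f := fun i => B (eb i) i) hqs (α := β)
      (fun m h1 h2 => by have h := hfree l₀ m hl₀p hl₀r h1 h2; linear_combination h - e5)
    linear_combination hsumB - hs
  have k1 := K1 hsym hmem hb hpr hqs hl₀p hl₀r hm₀q hm₀s
  rw [hdiag, hdiag] at k1
  have k1' := K1 hsym hmem hb (Ne.symm hpr) (Ne.symm hqs) hl₀r hl₀p hm₀s hm₀q
  rw [hsym (E n r s) (E n p q)] at k1'
  rw [hdiag, hdiag] at k1'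
  have hnc : (n : ℂ) * c = 0 := by
    linear_combination k1 + k1' - e1 - e2 + ((n : ℂ) - 4) * e5
  have hn0 : (n : ℂ) ≠ 0 := Nat.cast_ne_zero.2 (by omega)
  have hc : c = 0 := by
    rcases mul_eq_zero.1 hnc with h | h
    · exact absurd h hn0
    · exact h
  exact trace_of_czero hA hB hc hT

lemma caseB {p q s : Fin n} (hqs : q ≠ s) :
    LinearMap.trace ℂ (Vn n) (R (E n p q) (E n p s)) = 0 := by
  obtain ⟨A, B, c, hA, hB, hT⟩ := mem_decomp (hmem (E n p q) (E n p s))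
  obtain ⟨l₀, hl₀p, -⟩ := exists_ne2 hn p p
  obtain ⟨m₀, hm₀q, hm₀s⟩ := exists_ne2 hn q s
  have hdiag : ∀ i j : Fin n, ent (R (E n p q) (E n p s)) i j i j
      = A (eb i) i + B (eb j) j + c := by
    intro i j; rw [hT]; exact ent_diag A B c i j
  have hfree : ∀ l m : Fin n, l ≠ p → m ≠ q → m ≠ s →
      A (eb l) l + B (eb m) m + c = 0 := by
    intro l m h1 h3 h4
    have h := F1 hmem hb h1 h1 h3 h4
    rw [hdiag] at h; exact h
  set α := A (eb l₀) l₀ with hα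
  set β := B (eb m₀) m₀ with hβ
  have e5 : α + β + c = 0 := hfree l₀ m₀ hl₀p hm₀q hm₀s
  have hsumA : ∑ i, A (eb i) i = 0 := by rw [← trace_eq_sum]; exact hA
  have hsumB : ∑ i, B (eb i) i = 0 := by rw [← trace_eq_sum]; exact hB
  have e1 : A (eb p) p + ((n : ℂ) - 1) * α = 0 := by
    have hs := sum_split1 hn (f := fun i => A (eb i) i) (p := p) (α := α)
      (fun l h1 => by have h := hfree l m₀ h1 hm₀q hm₀s; linear_combination h - e5)
    linear_combination hsumA - hs
  have e2 : B (eb q) q + B (eb s) s + ((n : ℂ) - 2) * β = 0 := by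
    have hs := sum_split2 hn (f := fun i => B (eb i) i) hqs (α := β)
      (fun m h1 h2 => by have h := hfree l₀ m hl₀p h1 h2; linear_combination h - e5)
    linear_combination hsumB - hs
  have k2 := K2 hsym hmem hb hqs hl₀p hm₀q hm₀s
  rw [hdiag, hdiag, hdiag] at k2
  have hnc : (n : ℂ) * c = 0 := by
    linear_combination k2 - e1 - e2 + ((n : ℂ) - 3) * e5
  have hn0 : (n : ℂ) ≠ 0 := Nat.cast_ne_zero.2 (by omega)
  have hc : c = 0 := by
    rcases mul_eq_zero.1 hnc with h | h
    · exact absurd h hn0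
    · exact h
  exact trace_of_czero hA hB hc hT

lemma caseC {p q r : Fin n} (hpr : p ≠ r) :
    LinearMap.trace ℂ (Vn n) (R (E n p q) (E n r q)) = 0 := by
  obtain ⟨A, B, c, hA, hB, hT⟩ := mem_decomp (hmem (E n p q) (E n r q))
  obtain ⟨l₀, hl₀p, hl₀r⟩ := exists_ne2 hn p r
  obtain ⟨m₀, hm₀q, -⟩ := exists_ne2 hn q q
  have hdiag : ∀ i j : Fin n, ent (R (E n p q) (E n r q)) i j i j
      = A (eb i) i + B (eb j) j + c := by
    intro i j; rw [hT]; exact ent_diag A B c i j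
  have hfree : ∀ l m : Fin n, l ≠ p → l ≠ r → m ≠ q →
      A (eb l) l + B (eb m) m + c = 0 := by
    intro l m h1 h2 h3
    have h := F1 hmem hb h1 h2 h3 h3
    rw [hdiag] at h; exact h
  set α := A (eb l₀) l₀ with hα
  set β := B (eb m₀) m₀ with hβ
  have e5 : α + β + c = 0 := hfree l₀ m₀ hl₀p hl₀r hm₀q
  have hsumA : ∑ i, A (eb i) i = 0 := by rw [← trace_eq_sum]; exact hA
  have hsumB : ∑ i, B (eb i) i = 0 := by rw [← trace_eq_sum]; exact hB
  have e1 : A (eb p) p + A (eb r) r + ((n : ℂ) - 2) * α = 0 := by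
    have hs := sum_split2 hn (f := fun i => A (eb i) i) hpr (α := α)
      (fun l h1 h2 => by have h := hfree l m₀ h1 h2 hm₀q; linear_combination h - e5)
    linear_combination hsumA - hs
  have e2 : B (eb q) q + ((n : ℂ) - 1) * β = 0 := by
    have hs := sum_split1 hn (f := fun i => B (eb i) i) (p := q) (α := β)
      (fun m h1 => by have h := hfree l₀ m hl₀p hl₀r h1; linear_combination h - e5)
    linear_combination hsumB - hs
  have k3 := K3 hsym hmem hb hpr hl₀p hl₀r hm₀q
  rw [hdiag, hdiag, hdiag] at k3
  have hnc : (n : ℂ) * c = 0 := by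
    linear_combination k3 - e1 - e2 + ((n : ℂ) - 3) * e5
  have hn0 : (n : ℂ) ≠ 0 := Nat.cast_ne_zero.2 (by omega)
  have hc : c = 0 := by
    rcases mul_eq_zero.1 hnc with h | h
    · exact absurd h hn0
    · exact h
  exact trace_of_czero hA hB hc hT

lemma caseD (p q : Fin n) :
    LinearMap.trace ℂ (Vn n) (R (E n p q) (E n p q)) = 0 := by
  obtain ⟨A, B, c, hA, hB, hT⟩ := mem_decomp (hmem (E n p q) (E n p q))
  obtain ⟨l₀, hl₀p, -⟩ := exists_ne2 hn p p
  obtain ⟨m₀, hm₀q, -⟩ := exists_ne2 hn q q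
  have hdiag : ∀ i j : Fin n, ent (R (E n p q) (E n p q)) i j i j
      = A (eb i) i + B (eb j) j + c := by
    intro i j; rw [hT]; exact ent_diag A B c i j
  have hfree : ∀ l m : Fin n, l ≠ p → m ≠ q →
      A (eb l) l + B (eb m) m + c = 0 := by
    intro l m h1 h3
    have h := F1 hmem hb h1 h1 h3 h3
    rw [hdiag] at h; exact h
  set α := A (eb l₀) l₀ with hα
  set β := B (eb m₀) m₀ with hβ
  have e5 : α + β + c = 0 := hfree l₀ m₀ hl₀p hm₀q
  have hsumA : ∑ i, A (eb i) i = 0 := by rw [← trace_eq_sum]; exact hA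
  have hsumB : ∑ i, B (eb i) i = 0 := by rw [← trace_eq_sum]; exact hB
  have e1 : A (eb p) p + ((n : ℂ) - 1) * α = 0 := by
    have hs := sum_split1 hn (f := fun i => A (eb i) i) (p := p) (α := α)
      (fun l h1 => by have h := hfree l m₀ h1 hm₀q; linear_combination h - e5)
    linear_combination hsumA - hs
  have e2 : B (eb q) q + ((n : ℂ) - 1) * β = 0 := by
    have hs := sum_split1 hn (f := fun i => B (eb i) i) (p := q) (α := β)
      (fun m h1 => by have h := hfree l₀ m hl₀p h1; linear_combination h - e5)
    linear_combination hsumB - hs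
  have k4 := K4 hsym hmem hb hl₀p hm₀q
  rw [hdiag, hdiag] at k4
  have hnc : (n : ℂ) * c = 0 := by
    linear_combination k4 - e1 - e2 + ((n : ℂ) - 2) * e5
  have hn0 : (n : ℂ) ≠ 0 := Nat.cast_ne_zero.2 (by omega)
  have hc : c = 0 := by
    rcases mul_eq_zero.1 hnc with h | h
    · exact absurd h hn0
    · exact h
  exact trace_of_czero hA hB hc hT

lemma trace_basis (p q r s : Fin n) :
    LinearMap.trace ℂ (Vn n) (R (E n p q) (E n r s)) = 0 := by
  by_cases hpr : p = r
  · subst hpr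
    by_cases hqs : q = s
    · subst hqs; exact caseD hsym hmem hb hn p q
    · exact caseB hsym hmem hb hn hqs
  · by_cases hqs : q = s
    · subst hqs; exact caseC hsym hmem hb hn hpr
    · exact caseA hsym hmem hb hn hpr hqs

lemma trace_all (x y : Vn n) :
    LinearMap.trace ℂ (Vn n) (R x y) = 0 := by
  have hz : LinearMap.compr₂ R (LinearMap.trace ℂ (Vn n)) = 0 := by
    apply LinearMap.ext_basis (bV n) (bV n)
    intro i j
    simp only [LinearMap.compr₂_apply, LinearMap.zero_apply]
    rw [bV_apply' i, bV_apply' j]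
    exact trace_basis hsym hmem hb hn i.1 i.2 j.1 j.2
  have := congrFun (congrArg (fun (F : Vn n →ₗ[ℂ] Vn n →ₗ[ℂ] ℂ) (x : Vn n) => F x y) hz) x
  simpa using this

end Cases

lemma mem_h0 {T : Module.End ℂ (Vn n)} (hn : 3 ≤ n) (hT : T ∈ hset n)
    (htr : LinearMap.trace ℂ (Vn n) T = 0) :
    T ∈ Submodule.span ℂ {T : Module.End ℂ (Vn n) | ∃ A B : Module.End ℂ (Fin n → ℂ),
      LinearMap.trace ℂ (Fin n → ℂ) A = 0 ∧ LinearMap.trace ℂ (Fin n → ℂ) B = 0 ∧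
      T = TensorProduct.map A LinearMap.id + TensorProduct.map LinearMap.id B} := by
  obtain ⟨A, B, c, hA, hB, hTd⟩ := mem_decomp hT
  have hfr : ((Module.finrank ℂ (Vn n) : ℕ) : ℂ) = (n : ℂ) * n := by
    rw [Module.finrank_tensorProduct]
    push_cast [Module.finrank_fin_fun]
    ring
  have htr2 : c * ((n : ℂ) * n) = 0 := by
    rw [hTd, map_add, map_add, map_smul, LinearMap.trace_tensorProduct',
      LinearMap.trace_tensorProduct', hA, hB, LinearMap.trace_one, hfr] at htr
    simpa [smul_eq_mul] using htr
  have hn0 : (n : ℂ) ≠ 0 := Nat.cast_ne_zero.2 (by omega)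
  have hc : c = 0 := by
    rcases mul_eq_zero.1 htr2 with h | h
    · exact h
    · exact absurd h (mul_ne_zero hn0 hn0)
  refine Submodule.subset_span ⟨A, B, hA, hB, ?_⟩
  rw [hTd, hc]
  simp

lemma one_mem_hset : (1 : Module.End ℂ (Vn n)) ∈ hset n := by
  refine Submodule.subset_span ⟨0, 0, 1, by simp, by simp, ?_⟩
  rw [map_zero_left', map_zero_right']
  simp

end
end Stmt9Aux

open Stmt9Aux

theorem stmt9 (n : ℕ) (hn : 3 ≤ n)
    (h₀ h : Submodule ℂ (Module.End ℂ ((Fin n → ℂ) ⊗[ℂ] (Fin n → ℂ))))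
    (hh₀ : h₀ = Submodule.span ℂ
      {T : Module.End ℂ ((Fin n → ℂ) ⊗[ℂ] (Fin n → ℂ)) |
        ∃ A B : Module.End ℂ (Fin n → ℂ),
          LinearMap.trace ℂ (Fin n → ℂ) A = 0 ∧ LinearMap.trace ℂ (Fin n → ℂ) B = 0 ∧
          T = TensorProduct.map A LinearMap.id + TensorProduct.map LinearMap.id B})
    (hh : h = Submodule.span ℂ
      {T : Module.End ℂ ((Fin n → ℂ) ⊗[ℂ] (Fin n → ℂ)) |
        ∃ A B : Module.End ℂ (Fin n → ℂ), ∃ c : ℂ,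
          LinearMap.trace ℂ (Fin n → ℂ) A = 0 ∧ LinearMap.trace ℂ (Fin n → ℂ) B = 0 ∧
          T = TensorProduct.map A LinearMap.id + TensorProduct.map LinearMap.id B + c • 1}) :
    (∀ R, IsSkewCurv h R → ∀ x y,
      R x y ∈ h₀ ∧ LinearMap.trace ℂ ((Fin n → ℂ) ⊗[ℂ] (Fin n → ℂ)) (R x y) = 0) ∧
    ¬ IsSkewBerger h := by
  have hh' : h = hset n := hh
  have key : ∀ R, IsSkewCurv h R → ∀ x y,
      LinearMap.trace ℂ ((Fin n → ℂ) ⊗[ℂ] (Fin n → ℂ)) (R x y) = 0 := by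
    intro R hR x y
    obtain ⟨hsym, hmem, hb⟩ := hR
    have hmem' : ∀ x y, R x y ∈ hset n := by
      intro x y; rw [← hh']; exact hmem x y
    exact trace_all hsym hmem' hb hn x y
  constructor
  · intro R hR x y
    refine ⟨?_, key R hR x y⟩
    rw [hh₀]
    exact mem_h0 hn (by rw [← hh']; exact hR.2.1 x y) (key R hR x y)
  · intro hSB
    rw [IsSkewBerger] at hSB
    have h1 : (1 : Module.End ℂ ((Fin n → ℂ) ⊗[ℂ] (Fin n → ℂ))) ∈ h := by
      rw [hh']; exact one_mem_hset
    rw [hSB] at h1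
    have hle : Submodule.span ℂ
        {T : Module.End ℂ ((Fin n → ℂ) ⊗[ℂ] (Fin n → ℂ)) |
          ∃ R, IsSkewCurv h R ∧ ∃ x y, T = R x y} ≤
        LinearMap.ker (LinearMap.trace ℂ ((Fin n → ℂ) ⊗[ℂ] (Fin n → ℂ))) := by
      rw [Submodule.span_le]
      rintro T ⟨R, hR, x, y, rfl⟩
      exact key R hR x y
    have h2 := hle h1
    rw [LinearMap.mem_ker, LinearMap.trace_one] at h2
    have hfr : ((Module.finrank ℂ (Vn n) : ℕ) : ℂ) = (n : ℂ) * n := by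
      rw [Module.finrank_tensorProduct]
      push_cast [Module.finrank_fin_fun]
      ring
    rw [hfr] at h2
    have hn0 : (n : ℂ) ≠ 0 := Nat.cast_ne_zero.2 (by omega)
    exact mul_ne_zero hn0 hn0 h2
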